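/- arXiv:2603.20309 — 2 statements merged into one kernel-verified Lean document; each statement's English description precedes it below -/
import Mathlib

section
/- Let G be a finite simple graph, let S₁, …, S_k ⊆ V be anchor groups, let v* ∈ V, let val* be the reduction value function, and let γ be a positive integer. Then there exists a connected subgraph H of G with v* ∈ V(H), V(H) ∩ S_i ≠ ∅ for every i ∈ {1, …, k}, and |V(H)| + |E(H)| ≤ γ, if and only if there exists a feasible subgraph H' of G (connected, containing v*, and meeting every S_i) with Φ(H') ≥ 1/γ, where Φ is computed with respect to val*. -/
open scoped BigOperators

noncomputable def Phi {V : Type*} {G : SimpleGraph V} (H : G.Subgraph)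
    (valV : V → ℝ) (valE : Sym2 V → ℝ) : ℝ :=
  ((∑ᶠ v ∈ H.verts, valV v) + ∑ᶠ e ∈ H.edgeSet, valE e) /
    ((H.verts.ncard + H.edgeSet.ncard : ℕ) : ℝ)

noncomputable def redVal {V : Type*} [DecidableEq V] (vstar : V) : V → ℝ :=
  fun v => if v = vstar then 1 else 0

lemma phi_eq {V : Type*} [Fintype V] [DecidableEq V] {G : SimpleGraph V}
    (H : G.Subgraph) (vstar : V) (h : vstar ∈ H.verts) :
    Phi H (redVal vstar) (fun _ => 0) =
      1 / ((H.verts.ncard + H.edgeSet.ncard : ℕ) : ℝ) := by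
  have h1 : ∑ᶠ v ∈ H.verts, redVal vstar v = 1 := by
    rw [finsum_mem_inter_support_eq' _ H.verts {vstar}, finsum_mem_singleton]
    · simp [redVal]
    · intro x hx
      simp only [redVal, Function.mem_support, ne_eq, ite_eq_right_iff, not_forall] at hx
      obtain ⟨rfl, -⟩ := hx
      simp [h]
  simp [Phi, h1]

theorem stmt_4 {V : Type*} [Fintype V] [DecidableEq V] (G : SimpleGraph V)
    (k : ℕ) (S : Fin k → Set V) (vstar : V) (γ : ℕ) (hγ : 0 < γ) :
    (∃ H : G.Subgraph, H.Connected ∧ vstar ∈ H.verts ∧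
        (∀ i : Fin k, (H.verts ∩ S i).Nonempty) ∧
        H.verts.ncard + H.edgeSet.ncard ≤ γ) ↔
      (∃ H' : G.Subgraph, H'.Connected ∧ vstar ∈ H'.verts ∧
        (∀ i : Fin k, (H'.verts ∩ S i).Nonempty) ∧
        Phi H' (redVal vstar) (fun _ => 0) ≥ 1 / (γ : ℝ)) := by
  have key : ∀ H : G.Subgraph, vstar ∈ H.verts →
      (Phi H (redVal vstar) (fun _ => 0) ≥ 1 / (γ : ℝ) ↔
        H.verts.ncard + H.edgeSet.ncard ≤ γ) := by
    intro H h
    have hvpos : 0 < H.verts.ncard :=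
      Set.ncard_pos (H.verts.toFinite) |>.mpr ⟨vstar, h⟩
    have hn : 0 < H.verts.ncard + H.edgeSet.ncard := Nat.lt_of_lt_of_le hvpos (Nat.le_add_right _ _)
    rw [phi_eq H vstar h, ge_iff_le,
      one_div_le_one_div (by exact_mod_cast hγ : (0:ℝ) < _) (by exact_mod_cast hn : (0:ℝ) < _)]
    exact_mod_cast Iff.rfl
  constructor
  · rintro ⟨H, hc, hv, hs, hn⟩
    exact ⟨H, hc, hv, hs, (key H hv).mpr hn⟩
  · rintro ⟨H, hc, hv, hs, hn⟩
    exact ⟨H, hc, hv, hs, (key H hv).mp hn⟩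
end

section
/- Let G be a finite simple graph, let S₁, …, S_k ⊆ V be anchor groups, let v* ∈ V, and let val* be the reduction value function. Suppose the set F of feasible subgraphs of G is nonempty, and let ρ be a real number with 0 < ρ ≤ 1. If H ∈ F satisfies Φ(H) ≥ ρ · max_{H' ∈ F} Φ(H') (with Φ computed with respect to val*), then |V(H)| + |E(H)| ≤ (1/ρ) · min_{H' ∈ F} (|V(H')| + |E(H')|); that is, a ρ-approximate solution of the constructed OISR instance yields a (1/ρ)-approximate Group Steiner tree solution. -/
open scoped BigOperators

theorem stmt_7 {V : Type*} [Fintype V] [DecidableEq V] (G : SimpleGraph V)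
    (k : ℕ) (S : Fin k → Set V) (vstar : V)
    (F : Set G.Subgraph)
    (hF : F = {H : G.Subgraph | H.Connected ∧ vstar ∈ H.verts ∧
        ∀ i : Fin k, (H.verts ∩ S i).Nonempty})
    (hne : F.Nonempty)
    (ρ : ℝ) (hρ0 : 0 < ρ) (hρ1 : ρ ≤ 1)
    (M : ℝ) (m : ℕ)
    (hM : IsGreatest ((fun H : G.Subgraph => Phi H (redVal vstar) (fun _ => 0)) '' F) M)
    (hm : IsLeast ((fun H : G.Subgraph => H.verts.ncard + H.edgeSet.ncard) '' F) m)
    (H : G.Subgraph) (hH : H ∈ F)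
    (happrox : Phi H (redVal vstar) (fun _ => 0) ≥ ρ * M) :
    ((H.verts.ncard + H.edgeSet.ncard : ℕ) : ℝ) ≤ (1 / ρ) * (m : ℝ) := by
  have key : ∀ H' : G.Subgraph, H' ∈ F →
      Phi H' (redVal vstar) (fun _ => 0)
        = 1 / ((H'.verts.ncard + H'.edgeSet.ncard : ℕ) : ℝ) := by
    intro H' hH'
    rw [hF] at hH'
    obtain ⟨-, hv, -⟩ := hH'
    unfold Phi
    have h1 : (∑ᶠ v ∈ H'.verts, redVal vstar v) = 1 := by
      rw [← (H'.verts.toFinite).coe_toFinset, finsum_mem_coe_finset]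
      unfold redVal
      rw [Finset.sum_ite_eq' (H'.verts.toFinite).toFinset vstar (fun _ => (1:ℝ))]
      simp [Set.Finite.mem_toFinset, hv]
    have h2 : (∑ᶠ e ∈ H'.edgeSet, (0:ℝ)) = 0 := by simp
    rw [h1, h2, add_zero]
  have pos : ∀ H' : G.Subgraph, H' ∈ F → 0 < H'.verts.ncard + H'.edgeSet.ncard := by
    intro H' hH'
    rw [hF] at hH'
    obtain ⟨-, hv, -⟩ := hH'
    have : 0 < H'.verts.ncard := (Set.ncard_pos H'.verts.toFinite).mpr ⟨vstar, hv⟩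
    omega
  obtain ⟨H₀, hH₀F, hH₀m⟩ := hm.1
  have hmpos : 0 < m := by rw [← hH₀m]; exact pos H₀ hH₀F
  have hMle : (1 : ℝ) / m ≤ M := by
    have h := hM.2 ⟨H₀, hH₀F, rfl⟩
    dsimp only at h hH₀m
    rw [key H₀ hH₀F, hH₀m] at h
    exact h
  rw [key H hH] at happrox
  have hsize : (0:ℝ) < ((H.verts.ncard + H.edgeSet.ncard : ℕ) : ℝ) := by
    exact_mod_cast pos H hH
  have hmpos' : (0:ℝ) < (m:ℝ) := by exact_mod_cast hmpos
  have h1 : ρ * (1 / m) ≤ 1 / ((H.verts.ncard + H.edgeSet.ncard : ℕ) : ℝ) :=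
    le_trans (by nlinarith) happrox
  rw [mul_one_div, div_le_div_iff₀ hmpos' hsize] at h1
  rw [div_mul_eq_mul_div, le_div_iff₀ hρ0]
  nlinarith [h1]
end
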